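/- If Y = G ×₁ U ×₂ V ×₃ W with W ∈ ℝ^{K×R₃} full column rank and P_M ∈ ℝ^{K_M×K} with rank(P_M W) = R₃, then the multilinear rank of Y_M = Y ×₃ P_M equals the multilinear rank of Y, and Y = Y_M ×₃ (W (P_M W)⁺). -/

import Mathlib

open Matrix
open scoped Kronecker

/-- Mode-1 contraction of a third-order tensor with a matrix. -/
def contract1 {I I' J K : ℕ} (P : Matrix (Fin I') (Fin I) ℝ)
    (Y : Fin I → Fin J → Fin K → ℝ) : Fin I' → Fin J → Fin K → ℝ :=
  fun i j k => ∑ l, P i l * Y l j k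

/-- Mode-2 contraction of a third-order tensor with a matrix. -/
def contract2 {I J J' K : ℕ} (P : Matrix (Fin J') (Fin J) ℝ)
    (Y : Fin I → Fin J → Fin K → ℝ) : Fin I → Fin J' → Fin K → ℝ :=
  fun i j k => ∑ l, P j l * Y i l k

/-- Mode-3 contraction of a third-order tensor with a matrix. -/
def contract3 {I J K K' : ℕ} (P : Matrix (Fin K') (Fin K) ℝ)
    (Y : Fin I → Fin J → Fin K → ℝ) : Fin I → Fin J → Fin K' → ℝ :=
  fun i j k => ∑ l, P k l * Y i j l

/-- Tucker (multilinear) product of a core tensor with three factor matrices. -/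
def tucker {I J K R₁ R₂ R₃ : ℕ} (G : Fin R₁ → Fin R₂ → Fin R₃ → ℝ)
    (U : Matrix (Fin I) (Fin R₁) ℝ) (V : Matrix (Fin J) (Fin R₂) ℝ)
    (W : Matrix (Fin K) (Fin R₃) ℝ) : Fin I → Fin J → Fin K → ℝ :=
  fun i j k => ∑ p, ∑ q, ∑ r, G p q r * U i p * V j q * W k r

/-- First (mode-1) unfolding, column-major: row index (k,j) with j fastest. -/
def unfold1 {I J K : ℕ} (Y : Fin I → Fin J → Fin K → ℝ) :
    Matrix (Fin K × Fin J) (Fin I) ℝ := fun p i => Y i p.2 p.1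

/-- Second (mode-2) unfolding. -/
def unfold2 {I J K : ℕ} (Y : Fin I → Fin J → Fin K → ℝ) :
    Matrix (Fin K × Fin I) (Fin J) ℝ := fun p j => Y p.2 j p.1

/-- Third (mode-3) unfolding. -/
def unfold3 {I J K : ℕ} (Y : Fin I → Fin J → Fin K → ℝ) :
    Matrix (Fin J × Fin I) (Fin K) ℝ := fun p k => Y p.2 p.1 k

/-- The tensor has multilinear rank at most (R₁,R₂,R₃). -/
def mlrankLE {I J K : ℕ} (Y : Fin I → Fin J → Fin K → ℝ) (R₁ R₂ R₃ : ℕ) : Prop :=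
  ∃ (G : Fin R₁ → Fin R₂ → Fin R₃ → ℝ) (U : Matrix (Fin I) (Fin R₁) ℝ)
    (V : Matrix (Fin J) (Fin R₂) ℝ) (W : Matrix (Fin K) (Fin R₃) ℝ),
    Y = tucker G U V W

/-- Frobenius norm of a third-order tensor. -/
noncomputable def frob {I J K : ℕ} (Y : Fin I → Fin J → Fin K → ℝ) : ℝ :=
  Real.sqrt (∑ i, ∑ j, ∑ k, (Y i j k) ^ 2)

/-- `X` is the Moore–Penrose pseudoinverse of `A` (the four Penrose conditions). -/
def IsMPInv {m n : Type*} [Fintype m] [Fintype n] (A : Matrix m n ℝ)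
    (X : Matrix n m ℝ) : Prop :=
  A * X * A = A ∧ X * A * X = X ∧ (A * X)ᵀ = A * X ∧ (X * A)ᵀ = X * A

/-- Polyadic (CP) combination of factor matrices. -/
def cp {I J K F : ℕ} (A : Matrix (Fin I) (Fin F) ℝ) (B : Matrix (Fin J) (Fin F) ℝ)
    (C : Matrix (Fin K) (Fin F) ℝ) : Fin I → Fin J → Fin K → ℝ :=
  fun i j k => ∑ r, A i r * B j r * C k r

/-- Khatri–Rao (columnwise Kronecker) product. -/
def khatriRao {n m F : ℕ} (N : Matrix (Fin n) (Fin F) ℝ) (M : Matrix (Fin m) (Fin F) ℝ) :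
    Matrix (Fin n × Fin m) (Fin F) ℝ := fun p r => N p.1 r * M p.2 r


lemma unfold1_contract3 {I J K K' : ℕ} (A : Matrix (Fin K') (Fin K) ℝ)
    (Y : Fin I → Fin J → Fin K → ℝ) :
    unfold1 (contract3 A Y) = (A ⊗ₖ (1 : Matrix (Fin J) (Fin J) ℝ)) * unfold1 Y := by
  ext p i
  simp [unfold1, contract3, mul_apply, Fintype.sum_prod_type, kroneckerMap_apply,
    one_apply, Finset.sum_ite_eq, mul_comm]

lemma unfold2_contract3 {I J K K' : ℕ} (A : Matrix (Fin K') (Fin K) ℝ)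
    (Y : Fin I → Fin J → Fin K → ℝ) :
    unfold2 (contract3 A Y) = (A ⊗ₖ (1 : Matrix (Fin I) (Fin I) ℝ)) * unfold2 Y := by
  ext p j
  simp [unfold2, contract3, mul_apply, Fintype.sum_prod_type, kroneckerMap_apply,
    one_apply, Finset.sum_ite_eq, mul_comm]

lemma unfold3_contract3 {I J K K' : ℕ} (A : Matrix (Fin K') (Fin K) ℝ)
    (Y : Fin I → Fin J → Fin K → ℝ) :
    unfold3 (contract3 A Y) = unfold3 Y * Aᵀ := by
  ext p k
  simp [unfold3, contract3, mul_apply, transpose_apply, mul_comm]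

lemma contract3_contract3 {I J K K' K'' : ℕ} (A : Matrix (Fin K'') (Fin K') ℝ)
    (B : Matrix (Fin K') (Fin K) ℝ) (Y : Fin I → Fin J → Fin K → ℝ) :
    contract3 A (contract3 B Y) = contract3 (A * B) Y := by
  funext i j k
  simp only [contract3, Matrix.mul_apply, Finset.mul_sum, Finset.sum_mul]
  rw [Finset.sum_comm]
  exact Finset.sum_congr rfl fun l _ => Finset.sum_congr rfl fun m _ => by ring

lemma contract3_tucker {I J K K' R₁ R₂ R₃ : ℕ} (A : Matrix (Fin K') (Fin K) ℝ)
    (G : Fin R₁ → Fin R₂ → Fin R₃ → ℝ)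
    (U : Matrix (Fin I) (Fin R₁) ℝ) (V : Matrix (Fin J) (Fin R₂) ℝ)
    (W : Matrix (Fin K) (Fin R₃) ℝ) :
    contract3 A (tucker G U V W) = tucker G U V (A * W) := by
  funext i j k
  simp only [contract3, tucker, Matrix.mul_apply, Finset.mul_sum, Finset.sum_mul]
  rw [Finset.sum_comm]
  refine Finset.sum_congr rfl fun p _ => ?_
  rw [Finset.sum_comm]
  refine Finset.sum_congr rfl fun q _ => ?_
  rw [Finset.sum_comm]
  exact Finset.sum_congr rfl fun r _ => Finset.sum_congr rfl fun l _ => by ring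

lemma left_inv_of_mp {K_M R₃ : ℕ} (A : Matrix (Fin K_M) (Fin R₃) ℝ)
    (Q : Matrix (Fin R₃) (Fin K_M) ℝ) (hA : A.rank = R₃) (h1 : A * Q * A = A) :
    Q * A = 1 := by
  have hinj : Function.Injective A.mulVecLin := by
    rw [← LinearMap.ker_eq_bot]
    have hrn := LinearMap.finrank_range_add_finrank_ker A.mulVecLin
    rw [show Module.finrank ℝ (LinearMap.range A.mulVecLin) = R₃ from hA] at hrn
    simp only [Module.finrank_pi, Fintype.card_fin] at hrn
    have : Module.finrank ℝ (LinearMap.ker A.mulVecLin) = 0 := by omega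
    exact Submodule.finrank_eq_zero.mp this
  have key : ∀ x, A.mulVec ((Q * A).mulVec x) = A.mulVec x := by
    intro x
    have := congrArg (fun M => M.mulVec x) h1
    simpa [← Matrix.mulVec_mulVec] using this
  have hid : ∀ x, (Q * A).mulVec x = x :=
    fun x => hinj (by simpa [Matrix.mulVecLin_apply] using key x)
  ext i j
  have h := congrFun (hid (Pi.single j 1)) i
  simpa [Matrix.mulVec_single, Pi.single_apply, Matrix.one_apply] using h

set_option maxHeartbeats 1000000 in
/-- If `rank(P_M W) = R₃`, the multilinear rank of `Y_M = Y ×₃ P_M` equals that of `Y`,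
and `Y = Y_M ×₃ (W (P_M W)⁺)`. -/
theorem degraded_rank_and_recovery
    {I J K K_M R₁ R₂ R₃ : ℕ}
    (G : Fin R₁ → Fin R₂ → Fin R₃ → ℝ)
    (U : Matrix (Fin I) (Fin R₁) ℝ) (V : Matrix (Fin J) (Fin R₂) ℝ)
    (W : Matrix (Fin K) (Fin R₃) ℝ)
    (hU : U.rank = R₁) (hV : V.rank = R₂) (hW : W.rank = R₃)
    (P_M : Matrix (Fin K_M) (Fin K) ℝ) (hPW : (P_M * W).rank = R₃)
    (Y : Fin I → Fin J → Fin K → ℝ) (hY : Y = tucker G U V W)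
    (Q : Matrix (Fin R₃) (Fin K_M) ℝ) (hQ : IsMPInv (P_M * W) Q) :
    (unfold1 (contract3 P_M Y)).rank = (unfold1 Y).rank ∧
    (unfold2 (contract3 P_M Y)).rank = (unfold2 Y).rank ∧
    (unfold3 (contract3 P_M Y)).rank = (unfold3 Y).rank ∧
    Y = contract3 (W * Q) (contract3 P_M Y) := by
  have hQA : Q * (P_M * W) = 1 := left_inv_of_mp (P_M * W) Q hPW hQ.1
  have hrec : contract3 (W * Q) (contract3 P_M Y) = Y := by
    rw [hY, contract3_tucker, contract3_tucker, ← Matrix.mul_assoc, Matrix.mul_assoc (W * Q),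
      Matrix.mul_assoc W Q, hQA, Matrix.mul_one]
  refine ⟨?_, ?_, ?_, hrec.symm⟩
  · refine le_antisymm ?_ ?_
    · rw [unfold1_contract3]; exact rank_mul_le_right _ _
    · conv_lhs => rw [← hrec]
      rw [unfold1_contract3]; exact rank_mul_le_right _ _
  · refine le_antisymm ?_ ?_
    · rw [unfold2_contract3]; exact rank_mul_le_right _ _
    · conv_lhs => rw [← hrec]
      rw [unfold2_contract3]; exact rank_mul_le_right _ _
  · refine le_antisymm ?_ ?_
    · rw [unfold3_contract3]; exact rank_mul_le_left _ _
    · conv_lhs => rw [← hrec]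
      rw [unfold3_contract3]; exact rank_mul_le_left _ _
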